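/- Let λ be a partition of m. Every standard Young tableau T of shape λ satisfies DesComp(T) ≤ λ in the lexicographic order on integer sequences (comparing entrywise at the first index where they differ, padding the shorter sequence with zeros), and there is exactly one standard Young tableau T of shape λ with DesComp(T) = λ. -/

import Mathlib

open scoped Classical

namespace QC

/-- A filling assigns a natural-number entry to each cell `(i, j)`;
entries are `0` outside the shape. Values are 1-based. -/
abbrev Filling : Type := ℕ → ℕ → ℕ

/-- The cell `(i, j)` (row `i`, column `j`, both 0-based) lies in the Young diagram of `lam`. -/
def InShape (lam : List ℕ) (i j : ℕ) : Prop :=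
  i < lam.length ∧ j < lam.getD i 0

/-- The finite set of cells of the Young diagram of `lam`. -/
def cells (lam : List ℕ) : Finset (ℕ × ℕ) :=
  (Finset.range lam.length).biUnion fun i =>
    ({i} : Finset ℕ) ×ˢ Finset.range (lam.getD i 0)

/-- `lam` is a partition of `m`: weakly decreasing, positive parts, summing to `m`. -/
def IsPartitionOf (m : ℕ) (lam : List ℕ) : Prop :=
  lam.Pairwise (· ≥ ·) ∧ (∀ x ∈ lam, 0 < x) ∧ lam.sum = m

/-- `a` is a composition of `m`: positive parts summing to `m`. -/
def IsCompositionOf (m : ℕ) (a : List ℕ) : Prop :=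
  (∀ x ∈ a, 0 < x) ∧ a.sum = m

/-- `T` is a semistandard Young tableau of shape `lam`: positive entries on the shape,
zero off the shape, rows weakly increasing, columns strictly increasing. -/
def IsSSYT (lam : List ℕ) (T : Filling) : Prop :=
  (∀ i j, ¬ InShape lam i j → T i j = 0) ∧
  (∀ i j, InShape lam i j → 0 < T i j) ∧
  (∀ i j1 j2, j1 ≤ j2 → InShape lam i j2 → T i j1 ≤ T i j2) ∧
  (∀ i1 i2 j, i1 < i2 → InShape lam i2 j → T i1 j < T i2 j)

/-- All entries of `T` are at most `n`. -/
def EntriesLE (n : ℕ) (T : Filling) : Prop := ∀ i j, T i j ≤ n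

/-- `T` is a standard Young tableau of shape `lam ⊢ m`: a semistandard tableau in which
each of `1, …, m` appears exactly once. -/
def IsSYT (lam : List ℕ) (m : ℕ) (T : Filling) : Prop :=
  IsSSYT lam T ∧ EntriesLE m T ∧
    ∀ k, 1 ≤ k → k ≤ m → ∃! c : ℕ × ℕ, InShape lam c.1 c.2 ∧ T c.1 c.2 = k

/-- `k` is a descent of the standard tableau `T`: `k + 1` lies in a strictly lower row. -/
def IsDescent (lam : List ℕ) (T : Filling) (k : ℕ) : Prop :=
  ∃ i1 j1 i2 j2, InShape lam i1 j1 ∧ InShape lam i2 j2 ∧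
    T i1 j1 = k ∧ T i2 j2 = k + 1 ∧ i1 < i2

/-- The sorted list of descents of `T`, a standard tableau with `m` cells. -/
noncomputable def descentList (lam : List ℕ) (m : ℕ) (T : Filling) : List ℕ :=
  ((Finset.Ico 1 m).filter fun k => IsDescent lam T k).sort (· ≤ ·)

/-- The number of descents of `T`. -/
noncomputable def numDescents (lam : List ℕ) (m : ℕ) (T : Filling) : ℕ :=
  ((Finset.Ico 1 m).filter fun k => IsDescent lam T k).card

/-- The descent composition `(d₁, d₂ - d₁, …, m - d_{s-1})` of a standard tableau. -/
noncomputable def desComp (lam : List ℕ) (m : ℕ) (T : Filling) : List ℕ :=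
  if m = 0 then [] else
    List.zipWith (· - ·) (descentList lam m T ++ [m]) (0 :: descentList lam m T)

/-- The number of cells of `T` carrying the entry `v`. -/
def countEq (lam : List ℕ) (T : Filling) (v : ℕ) : ℕ :=
  ((cells lam).filter fun c => T c.1 c.2 = v).card

/-- The weight of `T` as a list `(γ₁, …, γₙ)`, `γᵢ` the number of entries equal to `i`. -/
def wt (lam : List ℕ) (n : ℕ) (T : Filling) : List ℕ :=
  (List.range n).map fun v => countEq lam T (v + 1)

/-- The standardization of `T`: cells are relabelled `1, …, m` in order of increasing entry,
breaking ties between equal entries by increasing column index. -/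
noncomputable def stdize (lam : List ℕ) (T : Filling) : Filling := fun i j =>
  if InShape lam i j then
    ((cells lam).filter fun c =>
      T c.1 c.2 < T i j ∨ (T c.1 c.2 = T i j ∧ c.2 ≤ j)).card
  else 0

/-- Given a weak composition `g`, `destValue g k` is the unique `i` with
`g₁ + ⋯ + g_{i-1} < k ≤ g₁ + ⋯ + g_i` (and `0` for `k = 0`). -/
def destValue (g : List ℕ) (k : ℕ) : ℕ :=
  ((List.range g.length).filter fun i => (g.take i).sum < k).length

/-- The destandardization `D_g(T₀)`: each entry `j` of `T₀` is replaced by the unique `i`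
with `g₁ + ⋯ + g_{i-1} < j ≤ g₁ + ⋯ + g_i`. -/
def Dmap (g : List ℕ) (T : Filling) : Filling := fun i j => destValue g (T i j)

/-- `Refines a b`: the composition `b` refines `a`, i.e. `b` can be cut into consecutive
blocks whose sums are the parts of `a` in order. -/
def Refines (a b : List ℕ) : Prop :=
  ∃ L : List (List ℕ), L.flatten = b ∧ L.map List.sum = a

/-- Strict lexicographic order on integer sequences. -/
def lexLt (a b : List ℕ) : Prop := List.Lex (· < ·) a b

/-- Weak lexicographic order on integer sequences. -/
def lexLe (a b : List ℕ) : Prop := a = b ∨ lexLt a b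

/-- The largest entry of `T`. -/
def maxEntry (lam : List ℕ) (T : Filling) : ℕ :=
  (cells lam).sup fun c => T c.1 c.2

/-- The weight of `T` (over all values), with zero parts deleted. -/
def wtFull (lam : List ℕ) (T : Filling) : List ℕ :=
  ((List.range (maxEntry lam T)).map fun v => countEq lam T (v + 1)).filter (· ≠ 0)

/-- The proper partial sums `α₁, α₁ + α₂, …, α₁ + ⋯ + α_{s-1}` of a composition. -/
def innerSums (a : List ℕ) : List ℕ :=
  (List.range a.length).tail.map fun t => (a.take t).sum

/-- `f : Fin m → Fin n` encodes a sequence `1 ≤ i₁ ≤ i₂ ≤ … ≤ i_m ≤ n` (via `i_t = f (t-1) + 1`)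
which ascends strictly, `i_j < i_{j+1}`, at every proper partial sum `j` of `a`. -/
def IsFWord (m n : ℕ) (a : List ℕ) (f : Fin m → Fin n) : Prop :=
  Monotone f ∧
    ∀ (t : ℕ) (ht : t + 1 < m), (t + 1) ∈ innerSums a →
      f ⟨t, Nat.lt_of_succ_lt ht⟩ < f ⟨t + 1, ht⟩

/-- The fundamental quasisymmetric polynomial `F_a(x₁, …, xₙ)` of degree `m`. -/
noncomputable def Fpoly (m n : ℕ) (a : List ℕ) : MvPolynomial (Fin n) ℤ :=
  ∑ f ∈ Finset.univ.filter (fun f : Fin m → Fin n => IsFWord m n a f),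
    ∏ t : Fin m, MvPolynomial.X (f t)

/-- The monomial `x₁^{γ₁} ⋯ xₙ^{γₙ}` of a tableau `T` of weight `γ`. -/
noncomputable def wtMonomial (lam : List ℕ) (n : ℕ) (T : Filling) :
    MvPolynomial (Fin n) ℤ :=
  ∏ i : Fin n, MvPolynomial.X i ^ countEq lam T (i.val + 1)

/-- `Rot` of a word `w` of length `k` on `{1, …, n}`: the `j`-th letter of `rot k n w`
is `n + 1 - w_{k+1-j}` (1-based), here written 0-based. -/
def rot (k n : ℕ) (w : Fin k → ℕ) : Fin k → ℕ := fun j =>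
  n + 1 - w ⟨k - 1 - j.val, by have := j.isLt; omega⟩

/-- The descent set of a word `w = w₁ ⋯ w_k`: positions `i ∈ {1, …, k-1}` with `wᵢ > w_{i+1}`
(1-based positions; `w ⟨i-1,_⟩` is `wᵢ`). -/
noncomputable def wordDes (k : ℕ) (w : Fin k → ℕ) : Finset ℕ :=
  (Finset.Ico 1 k).filter fun i =>
    ∃ (h1 : i - 1 < k) (h2 : i < k), w ⟨i, h2⟩ < w ⟨i - 1, h1⟩

/-- The descent composition of a word of length `k`. -/
noncomputable def wordDesComp (k : ℕ) (w : Fin k → ℕ) : List ℕ :=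
  if k = 0 then []
  else
    List.zipWith (· - ·) ((wordDes k w).sort (· ≤ ·) ++ [k])
      (0 :: (wordDes k w).sort (· ≤ ·))

/-- partial sums -/
def psum (lam : List ℕ) (i : ℕ) : ℕ := (lam.take i).sum

lemma psum_succ {lam : List ℕ} {i : ℕ} (h : i < lam.length) :
    psum lam (i + 1) = psum lam i + lam.getD i 0 := by
  rw [psum, psum, List.sum_take_succ lam i h, List.getD_eq_getElem lam 0 h]

lemma psum_mono (lam : List ℕ) {i j : ℕ} (h : i ≤ j) : psum lam i ≤ psum lam j := by
  unfold psum
  rw [show j = i + (j - i) by omega, List.take_add, List.sum_append]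
  omega

lemma part_pos {m : ℕ} {lam : List ℕ} (hlam : IsPartitionOf m lam) {i : ℕ}
    (h : i < lam.length) : 0 < lam.getD i 0 := by
  rw [List.getD_eq_getElem lam 0 h]
  exact hlam.2.1 _ (lam.getElem_mem h)

lemma part_anti {m : ℕ} {lam : List ℕ} (hlam : IsPartitionOf m lam) {i i' : ℕ}
    (h : i ≤ i') (h' : i' < lam.length) : lam.getD i' 0 ≤ lam.getD i 0 := by
  rcases eq_or_lt_of_le h with rfl | hlt
  · exact le_rfl
  · rw [List.getD_eq_getElem lam 0 h', List.getD_eq_getElem lam 0 (lt_trans hlt h')]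
    exact (List.pairwise_iff_getElem.mp hlam.1) _ _ _ h' hlt

lemma psum_lt {m : ℕ} {lam : List ℕ} (hlam : IsPartitionOf m lam) {i j : ℕ}
    (hij : i < j) (hj : j ≤ lam.length) : psum lam i < psum lam j := by
  have h1 : i < lam.length := by omega
  have := psum_succ h1
  have := part_pos hlam h1
  have := psum_mono lam (show i + 1 ≤ j by omega)
  omega

lemma psum_length {m : ℕ} {lam : List ℕ} (hlam : IsPartitionOf m lam) :
    psum lam lam.length = m := by
  simp [psum, List.take_length, hlam.2.2]

lemma shape_mono {m : ℕ} {lam : List ℕ} (hlam : IsPartitionOf m lam) {i i' j : ℕ}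
    (h : i' ≤ i) (hs : InShape lam i j) : InShape lam i' j :=
  ⟨lt_of_le_of_lt h hs.1, lt_of_lt_of_le hs.2 (part_anti hlam h hs.1)⟩

lemma decomp {m : ℕ} {lam : List ℕ} (hlam : IsPartitionOf m lam) :
    ∀ t, t ≤ lam.length → ∀ v, 1 ≤ v → v ≤ psum lam t →
      ∃ i j, i < t ∧ InShape lam i j ∧ psum lam i + j + 1 = v := by
  intro t
  induction t with
  | zero => intro _ v h1 h2; simp [psum] at h2; omega
  | succ t ih =>
    intro ht v h1 h2
    have htl : t < lam.length := ht
    by_cases hc : v ≤ psum lam t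
    · obtain ⟨i, j, hi, hs, he⟩ := ih (le_of_lt htl) v h1 hc
      exact ⟨i, j, by omega, hs, he⟩
    · refine ⟨t, v - psum lam t - 1, by omega, ⟨htl, ?_⟩, by omega⟩
      have := psum_succ htl
      omega

noncomputable def posOf (lam : List ℕ) (T : Filling) (k : ℕ) : ℕ × ℕ :=
  if h : ∃ c : ℕ × ℕ, InShape lam c.1 c.2 ∧ T c.1 c.2 = k then h.choose else (0, 0)

lemma posOf_spec {lam : List ℕ} {m : ℕ} {T : Filling} (hT : IsSYT lam m T) {k : ℕ}
    (h1 : 1 ≤ k) (h2 : k ≤ m) :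
    InShape lam (posOf lam T k).1 (posOf lam T k).2 ∧
      T (posOf lam T k).1 (posOf lam T k).2 = k := by
  obtain ⟨c, hc, -⟩ := hT.2.2 k h1 h2
  have h : ∃ c : ℕ × ℕ, InShape lam c.1 c.2 ∧ T c.1 c.2 = k := ⟨c, hc⟩
  rw [posOf, dif_pos h]
  exact h.choose_spec

lemma posOf_unique {lam : List ℕ} {m : ℕ} {T : Filling} (hT : IsSYT lam m T) {k i j : ℕ}
    (h1 : 1 ≤ k) (h2 : k ≤ m) (hs : InShape lam i j) (hv : T i j = k) :
    (i, j) = posOf lam T k := by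
  obtain ⟨c, -, hu⟩ := hT.2.2 k h1 h2
  have := posOf_spec hT h1 h2
  rw [hu (i, j) ⟨hs, hv⟩, hu (posOf lam T k) ⟨this.1, this.2⟩]

lemma val_inj {lam : List ℕ} {m : ℕ} {T : Filling} (hT : IsSYT lam m T) {i j i' j' : ℕ}
    (hs : InShape lam i j) (hs' : InShape lam i' j') (h : T i j = T i' j') :
    (i, j) = (i', j') := by
  have h1 : 1 ≤ T i j := hT.1.2.1 i j hs
  have h2 : T i j ≤ m := hT.2.1 i j
  rw [posOf_unique hT h1 h2 hs rfl, posOf_unique hT h1 h2 hs' h.symm]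

lemma descent_iff {lam : List ℕ} {m : ℕ} {T : Filling} (hT : IsSYT lam m T) {k : ℕ}
    (h1 : 1 ≤ k) (h2 : k + 1 ≤ m) :
    IsDescent lam T k ↔ (posOf lam T k).1 < (posOf lam T (k + 1)).1 := by
  constructor
  · rintro ⟨i1, j1, i2, j2, hs1, hs2, hv1, hv2, hlt⟩
    rw [← posOf_unique hT h1 (by omega) hs1 hv1,
      ← posOf_unique hT (by omega) h2 hs2 hv2]
    exact hlt
  · intro hlt
    have p1 := posOf_spec hT h1 (by omega)
    have p2 := posOf_spec hT (by omega) h2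
    exact ⟨_, _, _, _, p1.1, p2.1, p1.2, p2.2, hlt⟩

/-- Rows `0..t-1` are filled superstandardly. -/
def RowsStd (lam : List ℕ) (T : Filling) (t : ℕ) : Prop :=
  ∀ i j, i < t → InShape lam i j → T i j = psum lam i + j + 1

lemma low_val {m : ℕ} {lam : List ℕ} {T : Filling} (hlam : IsPartitionOf m lam)
    {t i j : ℕ} (hrs : RowsStd lam T t) (ht : t ≤ lam.length) (hi : i < t)
    (hs : InShape lam i j) : T i j ≤ psum lam t := by
  rw [hrs i j hi hs]
  have h1 := psum_succ hs.1
  have h2 := psum_mono lam (show i + 1 ≤ t by omega)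
  have := hs.2
  omega

lemma high_val {m : ℕ} {lam : List ℕ} {T : Filling} (hlam : IsPartitionOf m lam)
    (hT : IsSYT lam m T) {t i j : ℕ} (hrs : RowsStd lam T t) (ht : t ≤ lam.length)
    (hs : InShape lam i j) (hi : t ≤ i) : psum lam t < T i j := by
  by_contra hc
  push_neg at hc
  have h1 : 1 ≤ T i j := hT.1.2.1 i j hs
  obtain ⟨i', j', hi', hs', he⟩ := decomp hlam t ht (T i j) h1 hc
  have : T i' j' = T i j := by rw [hrs i' j' hi' hs']; omega
  have := val_inj hT hs' hs this
  simp at this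
  omega

lemma row_ge {m : ℕ} {lam : List ℕ} {T : Filling} (hlam : IsPartitionOf m lam)
    (hT : IsSYT lam m T) {t k : ℕ} (hrs : RowsStd lam T t) (ht : t ≤ lam.length)
    (hk : psum lam t < k) (hk2 : k ≤ m) : t ≤ (posOf lam T k).1 := by
  have h1 : 1 ≤ k := by omega
  have p := posOf_spec hT h1 hk2
  by_contra hc
  push_neg at hc
  have := low_val hlam hrs ht hc p.1
  omega

lemma first_cell {m : ℕ} {lam : List ℕ} {T : Filling} (hlam : IsPartitionOf m lam)
    (hT : IsSYT lam m T) {t : ℕ} (hrs : RowsStd lam T t) (ht : t < lam.length) :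
    posOf lam T (psum lam t + 1) = (t, 0) := by
  have hm : psum lam t + 1 ≤ m := by
    have := psum_lt hlam ht le_rfl
    have := psum_length hlam
    omega
  set c := posOf lam T (psum lam t + 1) with hc
  have p := posOf_spec hT (show 1 ≤ psum lam t + 1 by omega) hm
  rw [← hc] at p
  obtain ⟨⟨pl, pr⟩, pv⟩ := p
  have hge : t ≤ c.1 := by
    have := row_ge hlam hT hrs (le_of_lt ht) (show psum lam t < psum lam t + 1 by omega) hm
    rw [← hc] at this
    exact this
  have hc2 : c.2 = 0 := by
    by_contra h0
    have hs' : InShape lam c.1 (c.2 - 1) := ⟨pl, by omega⟩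
    have hle : T c.1 (c.2 - 1) ≤ T c.1 c.2 := hT.1.2.2.1 c.1 _ _ (by omega) ⟨pl, pr⟩
    have hgt : psum lam t < T c.1 (c.2 - 1) :=
      high_val hlam hT hrs (le_of_lt ht) hs' hge
    have heq : T c.1 (c.2 - 1) = T c.1 c.2 := by omega
    have h2 := congrArg Prod.snd (val_inj hT hs' ⟨pl, pr⟩ heq)
    simp only [] at h2
    omega
  rw [hc2] at pv pr
  have hc1 : c.1 = t := by
    by_contra h0
    have hlt : t < c.1 := by omega
    have hsc : InShape lam c.1 0 := ⟨pl, pr⟩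
    have hs' : InShape lam (c.1 - 1) 0 :=
      shape_mono hlam (show c.1 - 1 ≤ c.1 by omega) hsc
    have hcol : T (c.1 - 1) 0 < T c.1 0 := hT.1.2.2.2 _ _ 0 (by omega) hsc
    have hgt : psum lam t < T (c.1 - 1) 0 :=
      high_val hlam hT hrs (le_of_lt ht) hs' (by omega)
    rw [pv] at hcol
    omega
  ext
  · rw [hc1]
  · rw [hc2]

lemma run_row {m : ℕ} {lam : List ℕ} {T : Filling} (hlam : IsPartitionOf m lam)
    (hT : IsSYT lam m T) {t K : ℕ} (hrs : RowsStd lam T t) (ht : t < lam.length)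
    (hK : K ≤ m)
    (hnod : ∀ k, psum lam t + 1 ≤ k → k < K → ¬ IsDescent lam T k) :
    ∀ k, psum lam t + 1 ≤ k → k ≤ K → (posOf lam T k).1 = t := by
  intro k
  induction k with
  | zero => intro h; omega
  | succ k ih =>
    intro hk1 hk2
    rcases Nat.lt_or_ge (psum lam t) k with hlt | hge
    · -- k ≥ psum t + 1, use ih for k
      have hik := ih (by omega) (by omega)
      have hge2 : t ≤ (posOf lam T (k + 1)).1 :=
        row_ge hlam hT hrs (le_of_lt ht) (by omega) (by omega)
      have hnd := hnod k (by omega) (by omega)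
      rw [descent_iff hT (by omega) (by omega)] at hnd
      omega
    · -- k + 1 = psum t + 1
      have : k + 1 = psum lam t + 1 := by omega
      rw [this, first_cell hlam hT hrs ht]

lemma run_bound {m : ℕ} {lam : List ℕ} {T : Filling} (hlam : IsPartitionOf m lam)
    (hT : IsSYT lam m T) {t K : ℕ} (hrs : RowsStd lam T t) (ht : t < lam.length)
    (hK : K ≤ m) (hK1 : psum lam t < K)
    (hnod : ∀ k, psum lam t + 1 ≤ k → k < K → ¬ IsDescent lam T k) :
    K ≤ psum lam (t + 1) := by
  have hrow := run_row hlam hT hrs ht hK hnod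
  have hinj : ∀ k ∈ Finset.Icc (psum lam t + 1) K, (posOf lam T k).2 ∈ Finset.range (lam.getD t 0) := by
    intro k hk
    rw [Finset.mem_Icc] at hk
    have p := posOf_spec hT (k := k) (by omega) (by omega)
    have hr := hrow k hk.1 hk.2
    rw [Finset.mem_range, ← hr]
    exact p.1.2
  have hIO : Set.InjOn (fun k => (posOf lam T k).2) (Finset.Icc (psum lam t + 1) K) := by
    intro a ha b hb hab
    simp only [Finset.coe_Icc, Set.mem_Icc] at ha hb
    have pa := posOf_spec hT (show 1 ≤ a by omega) (by omega)
    have pb := posOf_spec hT (show 1 ≤ b by omega) (by omega)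
    have heq : posOf lam T a = posOf lam T b := by
      ext
      · rw [hrow a ha.1 ha.2, hrow b hb.1 hb.2]
      · exact hab
    rw [← pa.2, ← pb.2, heq]
  have hcard := Finset.card_le_card_of_injOn _ hinj hIO
  rw [Nat.card_Icc, Finset.card_range] at hcard
  have := psum_succ ht
  omega

lemma nat_seg_id (g : ℕ → ℕ) (n : ℕ)
    (hmono : ∀ u u', u < u' → u' < n → g u < g u')
    (hb : ∀ u, u < n → g u < n) : ∀ u, u < n → g u = u := by
  have hlow : ∀ u, u < n → u ≤ g u := by
    intro u
    induction u with
    | zero => omega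
    | succ u ih =>
      intro h
      have := ih (by omega)
      have := hmono u (u + 1) (by omega) h
      omega
  have hstep : ∀ d u, u + d < n → g u + d ≤ g (u + d) := by
    intro d
    induction d with
    | zero => intro u h; simp only [Nat.add_zero]; omega
    | succ d ih =>
      intro u h
      rw [show u + (d + 1) = u + d + 1 by omega]
      have h1 := ih u (by omega)
      have h2 := hmono (u + d) (u + d + 1) (by omega) (by omega)
      omega
  intro u hu
  have h1 := hlow u hu
  have h2 := hstep (n - 1 - u) u (by omega)
  have h3 := hb (u + (n - 1 - u)) (by omega)
  omega

lemma fill_row {m : ℕ} {lam : List ℕ} {T : Filling} (hlam : IsPartitionOf m lam)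
    (hT : IsSYT lam m T) {t : ℕ} (hrs : RowsStd lam T t) (ht : t < lam.length)
    (hnod : ∀ k, psum lam t + 1 ≤ k → k < psum lam (t + 1) → ¬ IsDescent lam T k) :
    RowsStd lam T (t + 1) := by
  have hKm : psum lam (t + 1) ≤ m := by
    have := psum_mono lam (show t + 1 ≤ lam.length from ht)
    have := psum_length hlam
    omega
  have hps := psum_succ ht
  have hrow := run_row hlam hT hrs ht hKm hnod
  have hval : ∀ u, u < lam.getD t 0 →
      T t ((posOf lam T (psum lam t + 1 + u)).2) = psum lam t + 1 + u ∧
        (posOf lam T (psum lam t + 1 + u)).2 < lam.getD t 0 := by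
    intro u hu
    have pu := posOf_spec hT (show 1 ≤ psum lam t + 1 + u by omega) (by omega)
    have hru := hrow (psum lam t + 1 + u) (by omega) (by omega)
    have hp : posOf lam T (psum lam t + 1 + u) =
        (t, (posOf lam T (psum lam t + 1 + u)).2) := Prod.ext hru rfl
    rw [hp] at pu
    exact ⟨pu.2, pu.1.2⟩
  have hginj : ∀ u, u < lam.getD t 0 →
      (posOf lam T (psum lam t + 1 + u)).2 = u := by
    apply nat_seg_id
    · intro u u' huu hu'
      have h1 := hval u (by omega)
      have h2 := hval u' hu'
      by_contra hc
      push_neg at hc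
      have hle : T t ((posOf lam T (psum lam t + 1 + u')).2) ≤
          T t ((posOf lam T (psum lam t + 1 + u)).2) :=
        hT.1.2.2.1 t _ _ hc ⟨ht, h1.2⟩
      omega
    · intro u hu
      exact (hval u hu).2
  intro i j hi hs
  rcases Nat.lt_or_ge i t with hit | hit
  · exact hrs i j hit hs
  · have hieq : i = t := by omega
    subst hieq
    have h1 := hval j hs.2
    have h2 := hginj j hs.2
    rw [h2] at h1
    omega

lemma prefix_of_H {m : ℕ} {lam : List ℕ} {T : Filling} (hlam : IsPartitionOf m lam)
    (hT : IsSYT lam m T) :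
    ∀ t, t ≤ lam.length →
      (∀ k, 1 ≤ k → k < psum lam t → (∀ i, 1 ≤ i → i < t → k ≠ psum lam i) →
        ¬ IsDescent lam T k) →
      RowsStd lam T t := by
  intro t
  induction t with
  | zero => intro _ _ i j hi _; omega
  | succ t ih =>
    intro ht H
    have hps := psum_succ (show t < lam.length from ht)
    have hrs : RowsStd lam T t := by
      apply ih (by omega)
      intro k hk1 hk2 hk3
      refine H k hk1 (by omega) ?_
      intro i hi1 hi2
      rcases Nat.lt_or_ge i t with h | h
      · exact hk3 i hi1 h
      · have : i = t := by omega
        subst this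
        omega
    apply fill_row hlam hT hrs ht
    intro k hk1 hk2
    refine H k (by omega) hk2 ?_
    intro i hi1 hi2
    have : i ≤ t := by omega
    have := psum_mono lam this
    omega


lemma lex_helper : ∀ (a b : List ℕ),
    (∀ t (h1 : t < a.length) (h2 : t < b.length), a.take t = b.take t →
      a[t] ≤ b[t]) →
    (∀ t, t < a.length → a.take t = b.take t → t < b.length) →
    a = b ∨ List.Lex (· < ·) a b := by
  intro a
  induction a with
  | nil =>
    intro b _ _
    cases b with
    | nil => exact Or.inl rfl
    | cons y bs => exact Or.inr List.Lex.nil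
  | cons x as ih =>
    intro b hval hlen
    cases b with
    | nil =>
      have := hlen 0 (by simp) (by simp)
      simp at this
    | cons y bs =>
      have h0 : x ≤ y := hval 0 (by simp) (by simp) (by simp)
      rcases eq_or_lt_of_le h0 with heq | hlt
      · subst heq
        have hv' : ∀ t (h1 : t < as.length) (h2 : t < bs.length),
            as.take t = bs.take t → as[t] ≤ bs[t] := by
          intro t h1 h2 hteq
          have := hval (t + 1) (by simpa using h1) (by simpa using h2)
            (by simpa using hteq)
          simpa using this
        have hl' : ∀ t, t < as.length → as.take t = bs.take t → t < bs.length := by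
          intro t h1 hteq
          have := hlen (t + 1) (by simpa using h1) (by simpa using hteq)
          simpa using this
        rcases ih bs hv' hl' with h | h
        · exact Or.inl (by rw [h])
        · exact Or.inr (List.Lex.cons h)
      · exact Or.inr (List.Lex.rel hlt)

/-- The boundary function: `bnd D m 0 = 0`, `bnd D m (j+1) = D[j]` for `j < |D|`, else `m`. -/
def bnd (D : List ℕ) (m i : ℕ) : ℕ :=
  if i = 0 then 0 else if h : i - 1 < D.length then D[i - 1] else m

lemma bnd_zero (D : List ℕ) (m : ℕ) : bnd D m 0 = 0 := rfl

lemma bnd_succ_lt (D : List ℕ) (m : ℕ) {j : ℕ} (h : j < D.length) :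
    bnd D m (j + 1) = D[j] := by
  simp [bnd, h]

lemma bnd_top (D : List ℕ) (m : ℕ) {i : ℕ} (h : D.length < i) :
    bnd D m i = m := by
  have h0 : i ≠ 0 := by omega
  have h1 : ¬ (i - 1 < D.length) := by omega
  simp [bnd, h0, h1]

lemma bnd_le {D : List ℕ} {m : ℕ} (hmem : ∀ x ∈ D, 1 ≤ x ∧ x < m) (i : ℕ) :
    bnd D m i ≤ m := by
  rcases Nat.eq_zero_or_pos i with rfl | hi
  · rw [bnd_zero]; exact Nat.zero_le m
  · by_cases h : i - 1 < D.length
    · rw [show i = (i-1) + 1 by omega, bnd_succ_lt D m h]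
      exact le_of_lt (hmem _ (D.getElem_mem h)).2
    · rw [bnd_top D m (by omega)]

lemma bnd_strict {D : List ℕ} {m : ℕ} (hsort : List.Pairwise (· < ·) D)
    (hmem : ∀ x ∈ D, 1 ≤ x ∧ x < m) (hm : 1 ≤ m) {i j : ℕ} (hij : i < j)
    (hj : j ≤ D.length + 1) : bnd D m i < bnd D m j := by
  have hpw := List.pairwise_iff_getElem.mp hsort
  by_cases hjl : j - 1 < D.length
  · rw [show j = (j-1)+1 by omega, bnd_succ_lt D m hjl]
    rcases Nat.eq_zero_or_pos i with rfl | hi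
    · rw [bnd_zero]
      exact (hmem _ (D.getElem_mem hjl)).1
    · have hil : i - 1 < D.length := by omega
      rw [show i = (i-1)+1 by omega, bnd_succ_lt D m hil]
      exact hpw _ _ hil hjl (by omega)
  · rw [show bnd D m j = m from bnd_top D m (by omega)]
    rcases Nat.eq_zero_or_pos i with rfl | hi
    · rw [bnd_zero]; omega
    · have hil : i - 1 < D.length := by omega
      rw [show i = (i-1)+1 by omega, bnd_succ_lt D m hil]
      exact (hmem _ (D.getElem_mem hil)).2

lemma bnd_mono {D : List ℕ} {m : ℕ} (hsort : List.Pairwise (· < ·) D)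
    (hmem : ∀ x ∈ D, 1 ≤ x ∧ x < m) (hm : 1 ≤ m) {i j : ℕ} (hij : i ≤ j) :
    bnd D m i ≤ bnd D m j := by
  rcases eq_or_lt_of_le hij with rfl | hlt
  · exact le_rfl
  · by_cases hj : j ≤ D.length + 1
    · exact le_of_lt (bnd_strict hsort hmem hm hlt hj)
    · rw [show bnd D m j = m from bnd_top D m (by omega)]
      exact bnd_le hmem i


variable {lam : List ℕ} {m : ℕ} {T : Filling}

lemma descentList_sorted : List.Pairwise (· < ·) (descentList lam m T) :=
  (Finset.sortedLT_sort _).pairwise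

lemma descentList_mem {x : ℕ} :
    x ∈ descentList lam m T ↔ 1 ≤ x ∧ x < m ∧ IsDescent lam T x := by
  rw [descentList, Finset.mem_sort, Finset.mem_filter, Finset.mem_Ico]
  tauto

lemma descentList_mem' (hmem : x ∈ descentList lam m T) : 1 ≤ x ∧ x < m :=
  ⟨(descentList_mem.mp hmem).1, (descentList_mem.mp hmem).2.1⟩

lemma desComp_length (hm : m ≠ 0) :
    (desComp lam m T).length = (descentList lam m T).length + 1 := by
  simp [desComp, hm]

lemma desComp_get (hm : m ≠ 0) {i : ℕ} (hi : i < (descentList lam m T).length + 1) :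
    (desComp lam m T)[i]'(by rw [desComp_length hm]; omega) =
      bnd (descentList lam m T) m (i + 1) - bnd (descentList lam m T) m i := by
  set D := descentList lam m T with hD
  have hup : (D ++ [m])[i]'(by simp; omega) = bnd D m (i + 1) := by
    by_cases h : i < D.length
    · rw [List.getElem_append_left h, bnd_succ_lt D m h]
    · have hi' : i = D.length := by omega
      rw [List.getElem_append_right (by omega), bnd_top D m (by omega)]
      simp [hi']
  have hlo : (0 :: D)[i]'(by simp; omega) = bnd D m i := by
    rcases Nat.eq_zero_or_pos i with rfl | hpos
    · rw [List.getElem_cons_zero, bnd_zero]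
    · obtain ⟨i', rfl⟩ : ∃ i', i = i' + 1 := ⟨i - 1, by omega⟩
      rw [List.getElem_cons_succ, bnd_succ_lt D m (Nat.succ_lt_succ_iff.mp hi)]
  have hA : desComp lam m T = List.zipWith (· - ·) (D ++ [m]) (0 :: D) := by
    unfold desComp
    rw [if_neg hm, ← hD]
  simp only [hA]
  rw [List.getElem_zipWith, hup, hlo]

lemma desComp_sum_take (hm : m ≠ 0) :
    ∀ t, t ≤ (descentList lam m T).length + 1 →
      ((desComp lam m T).take t).sum = bnd (descentList lam m T) m t := by
  have hmem : ∀ x ∈ descentList lam m T, 1 ≤ x ∧ x < m := fun x h => descentList_mem' h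
  intro t
  induction t with
  | zero => intro _; simp [bnd_zero]
  | succ t ih =>
    intro ht
    have hlen : t < (desComp lam m T).length := by rw [desComp_length hm]; omega
    rw [List.sum_take_succ _ _ hlen, ih (by omega), desComp_get hm (by omega)]
    have h1 := bnd_mono descentList_sorted hmem (by omega)
      (show t ≤ t + 1 by omega)
    omega

/-- The row-superstandard tableau. -/
noncomputable def T0 (lam : List ℕ) : Filling := fun i j =>
  if InShape lam i j then psum lam i + j + 1 else 0

variable {lam : List ℕ} {m : ℕ}

lemma T0_val {i j : ℕ} (hs : InShape lam i j) : T0 lam i j = psum lam i + j + 1 :=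
  if_pos hs

lemma cell_val_le (hlam : IsPartitionOf m lam) {i j : ℕ} (hs : InShape lam i j) :
    psum lam i + j + 1 ≤ psum lam (i + 1) := by
  have := psum_succ hs.1
  have := hs.2
  omega

lemma cell_inj (hlam : IsPartitionOf m lam) {i j i' j' : ℕ} (hs : InShape lam i j)
    (hs' : InShape lam i' j') (h : psum lam i + j + 1 = psum lam i' + j' + 1) :
    i = i' ∧ j = j' := by
  rcases lt_trichotomy i i' with hlt | heq | hgt
  · have h1 := cell_val_le hlam hs
    have h2 := psum_mono lam (show i + 1 ≤ i' from hlt)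
    omega
  · subst heq
    exact ⟨rfl, by omega⟩
  · have h1 := cell_val_le hlam hs'
    have h2 := psum_mono lam (show i' + 1 ≤ i from hgt)
    omega

lemma T0_SYT (hlam : IsPartitionOf m lam) : IsSYT lam m (T0 lam) := by
  refine ⟨⟨fun i j h => if_neg h, fun i j hs => by rw [T0_val hs]; omega, ?_, ?_⟩, ?_, ?_⟩
  · intro i j1 j2 hj hs2
    have h22 := hs2.2
    have hs1 : InShape lam i j1 := ⟨hs2.1, by omega⟩
    rw [T0_val hs1, T0_val hs2]
    omega
  · intro i1 i2 j hi hs2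
    have hs1 : InShape lam i1 j := shape_mono hlam (le_of_lt hi) hs2
    rw [T0_val hs1, T0_val hs2]
    have h1 := cell_val_le hlam hs1
    have h2 := psum_mono lam (show i1 + 1 ≤ i2 from hi)
    omega
  · intro i j
    by_cases hs : InShape lam i j
    · rw [T0_val hs]
      have h1 := cell_val_le hlam hs
      have h2 := psum_mono lam (show i + 1 ≤ lam.length from hs.1)
      have h3 := psum_length hlam
      omega
    · rw [T0, if_neg hs]; omega
  · intro k hk1 hk2
    obtain ⟨i, j, hi, hs, he⟩ := decomp hlam lam.length le_rfl k hk1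
      (by rw [psum_length hlam]; exact hk2)
    refine ⟨(i, j), ⟨hs, by rw [T0_val hs]; exact he⟩, ?_⟩
    rintro ⟨i', j'⟩ ⟨hs', he'⟩
    rw [T0_val hs'] at he'
    have := cell_inj hlam hs' hs (by omega)
    exact Prod.ext this.1 this.2

lemma T0_descent (hlam : IsPartitionOf m lam) {k : ℕ} :
    IsDescent lam (T0 lam) k ↔ ∃ r, 1 ≤ r ∧ r < lam.length ∧ k = psum lam r := by
  constructor
  · rintro ⟨i1, j1, i2, j2, hs1, hs2, hv1, hv2, hlt⟩
    rw [T0_val hs1] at hv1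
    rw [T0_val hs2] at hv2
    have h1 := cell_val_le hlam hs1
    have h2 := psum_mono lam (show i1 + 1 ≤ i2 from hlt)
    have hj2 : j2 = 0 := by omega
    exact ⟨i2, by omega, hs2.1, by omega⟩
  · rintro ⟨r, hr1, hr2, rfl⟩
    have hr1' : r - 1 < lam.length := by omega
    have hpos1 := part_pos hlam hr1'
    have hpos2 := part_pos hlam hr2
    have hs1 : InShape lam (r - 1) (lam.getD (r - 1) 0 - 1) := ⟨hr1', by omega⟩
    have hs2 : InShape lam r 0 := ⟨hr2, hpos2⟩
    refine ⟨r - 1, lam.getD (r - 1) 0 - 1, r, 0, hs1, hs2, ?_, ?_, by omega⟩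
    · rw [T0_val hs1]
      have := psum_succ hr1'
      rw [show r - 1 + 1 = r by omega] at this
      omega
    · rw [T0_val hs2]

lemma T0_descentList (hlam : IsPartitionOf m lam) :
    descentList lam m (T0 lam) =
      (List.range (lam.length - 1)).map fun r => psum lam (r + 1) := by
  set L := (List.range (lam.length - 1)).map fun r => psum lam (r + 1) with hL
  have hLlen : L.length = lam.length - 1 := by simp [hL]
  have hLget : ∀ i (h : i < L.length), L[i] = psum lam (i + 1) := by
    intro i h
    simp [hL]
  have hLsorted : List.Pairwise (· < ·) L := by
    rw [List.pairwise_iff_getElem]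
    intro a b ha hb hab
    rw [hLget a ha, hLget b hb]
    exact psum_lt hlam (by omega) (by omega)
  have hLnodup : L.Nodup := hLsorted.imp fun h => ne_of_lt h
  have hmemL : ∀ k, k ∈ L ↔ ∃ r, 1 ≤ r ∧ r < lam.length ∧ k = psum lam r := by
    intro k
    rw [hL]
    simp only [List.mem_map, List.mem_range]
    constructor
    · rintro ⟨r, hr, rfl⟩
      exact ⟨r + 1, by omega, by omega, rfl⟩
    · rintro ⟨r, hr1, hr2, rfl⟩
      exact ⟨r - 1, by omega, by rw [show r - 1 + 1 = r by omega]⟩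
  have hset : (Finset.Ico 1 m).filter (fun k => IsDescent lam (T0 lam) k) = L.toFinset := by
    ext k
    rw [Finset.mem_filter, Finset.mem_Ico, List.mem_toFinset, hmemL k, T0_descent hlam]
    constructor
    · rintro ⟨-, h⟩; exact h
    · rintro ⟨r, hr1, hr2, rfl⟩
      have h1 : psum lam 0 < psum lam r := psum_lt hlam (by omega) (by omega)
      have h2 : psum lam r < psum lam lam.length := psum_lt hlam hr2 le_rfl
      rw [psum_length hlam] at h2
      have h0 : psum lam 0 = 0 := by simp [psum]
      exact ⟨⟨by omega, h2⟩, r, hr1, hr2, rfl⟩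
  rw [descentList, hset]
  exact (List.toFinset_sort (· ≤ ·) hLnodup).mpr (hLsorted.imp fun h => le_of_lt h)

lemma T0_desComp (hlam : IsPartitionOf m lam) (hm : m ≠ 0) :
    desComp lam m (T0 lam) = lam := by
  have hl : 1 ≤ lam.length := by
    by_contra h
    have : lam = [] := by
      cases lam with
      | nil => rfl
      | cons a l => simp at h
    rw [this] at hlam
    have := hlam.2.2
    simp at this
    omega
  set L := (List.range (lam.length - 1)).map fun r => psum lam (r + 1) with hL
  have hLlen : L.length = lam.length - 1 := by simp [hL]
  have hLget : ∀ i (h : i < L.length), L[i] = psum lam (i + 1) := by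
    intro i h
    simp [hL]
  unfold desComp
  rw [if_neg hm, T0_descentList hlam, ← hL]
  apply List.ext_getElem
  · simp [hLlen]
    omega
  · intro n h1 h2
    rw [List.getElem_zipWith]
    have hup : (L ++ [m])[n]'(by simp [hLlen]; omega) = psum lam (n + 1) := by
      by_cases h : n < L.length
      · rw [List.getElem_append_left h, hLget n h]
      · have hn : n = lam.length - 1 := by
          simp [hLlen] at h ⊢
          omega
        rw [List.getElem_append_right (by omega)]
        simp
        rw [show n + 1 = lam.length by omega, psum_length hlam]
    have hlo : (0 :: L)[n]'(by simp [hLlen]; omega) = psum lam n := by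
      rcases Nat.eq_zero_or_pos n with rfl | hpos
      · simp [psum]
      · obtain ⟨n', rfl⟩ : ∃ n', n = n' + 1 := ⟨n - 1, by omega⟩
        rw [List.getElem_cons_succ, hLget n' (by rw [hLlen]; omega)]
    rw [hup, hlo]
    have := psum_succ h2
    rw [List.getD_eq_getElem lam 0 h2] at this
    omega


section Central
variable {lam : List ℕ} {m : ℕ} {T : Filling}

lemma take_bnd (hm : m ≠ 0) {t : ℕ} (htlen : t ≤ (descentList lam m T).length + 1)
    (htake : (desComp lam m T).take t = lam.take t) :
    ∀ i, i ≤ t → bnd (descentList lam m T) m i = psum lam i := by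
  intro i hi
  have h1 : (desComp lam m T).take i = lam.take i := by
    have h := congrArg (List.take i) htake
    rwa [List.take_take, List.take_take, Nat.min_eq_left hi] at h
  have h2 := desComp_sum_take (lam := lam) (T := T) hm i (by omega)
  rw [h1] at h2
  exact h2.symm

lemma central_rows (hlam : IsPartitionOf m lam) (hT : IsSYT lam m T) (hm : m ≠ 0)
    {t : ℕ} (htl : t ≤ lam.length)
    (htlen : t ≤ (descentList lam m T).length + 1)
    (htake : (desComp lam m T).take t = lam.take t) :
    RowsStd lam T t := by
  have hmem : ∀ x ∈ descentList lam m T, 1 ≤ x ∧ x < m := fun x h => descentList_mem' h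
  have hsort := descentList_sorted (lam := lam) (m := m) (T := T)
  have hbnd := take_bnd hm htlen htake
  apply prefix_of_H hlam hT t htl
  intro k hk1 hk2 hk3 hdes
  have hkm : k < m := by
    have := psum_length hlam
    have := psum_mono lam htl
    omega
  have hkD : k ∈ descentList lam m T := descentList_mem.mpr ⟨hk1, hkm, hdes⟩
  obtain ⟨j, hj, hjk⟩ := List.mem_iff_getElem.mp hkD
  have hkb : bnd (descentList lam m T) m (j + 1) = k := by
    rw [bnd_succ_lt _ m hj, hjk]
  have hbt := hbnd t le_rfl
  have hjt : j + 1 < t := by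
    by_contra hc
    push_neg at hc
    have := bnd_mono hsort hmem (by omega) hc
    omega
  have hbj := hbnd (j + 1) (by omega)
  exact hk3 (j + 1) (by omega) hjt (by omega)

lemma central_bound (hlam : IsPartitionOf m lam) (hT : IsSYT lam m T) (hm : m ≠ 0)
    {t : ℕ} (htl : t < lam.length) (htA : t < (desComp lam m T).length)
    (htake : (desComp lam m T).take t = lam.take t) :
    (desComp lam m T)[t]'htA ≤ lam.getD t 0 := by
  have hmem : ∀ x ∈ descentList lam m T, 1 ≤ x ∧ x < m := fun x h => descentList_mem' h
  have hsort := descentList_sorted (lam := lam) (m := m) (T := T)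
  have htlen : t < (descentList lam m T).length + 1 := by
    rw [desComp_length hm] at htA
    exact htA
  have hbnd := take_bnd hm (by omega) htake
  have hbt := hbnd t le_rfl
  have hrs := central_rows hlam hT hm (le_of_lt htl) (by omega) htake
  have hK1 : psum lam t < bnd (descentList lam m T) m (t + 1) := by
    have := bnd_strict hsort hmem (by omega) (show t < t + 1 by omega) (by omega)
    omega
  have hKm : bnd (descentList lam m T) m (t + 1) ≤ m := bnd_le hmem _
  have hnod : ∀ k, psum lam t + 1 ≤ k → k < bnd (descentList lam m T) m (t + 1) →
      ¬ IsDescent lam T k := by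
    intro k h1 h2 hdes
    have hkD : k ∈ descentList lam m T := descentList_mem.mpr ⟨by omega, by omega, hdes⟩
    obtain ⟨j, hj, hjk⟩ := List.mem_iff_getElem.mp hkD
    have hkb : bnd (descentList lam m T) m (j + 1) = k := by
      rw [bnd_succ_lt _ m hj, hjk]
    rcases le_or_gt (j + 1) t with h | h
    · have := bnd_mono hsort hmem (by omega) h
      omega
    · have := bnd_mono hsort hmem (by omega) (show t + 1 ≤ j + 1 by omega)
      omega
  have hrun := run_bound hlam hT hrs htl hKm hK1 hnod
  have hps := psum_succ htl
  have hfin : bnd (descentList lam m T) m (t + 1) - bnd (descentList lam m T) m t ≤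
      lam.getD t 0 := by omega
  exact le_of_eq_of_le (desComp_get hm htlen) hfin

lemma central_length (hlam : IsPartitionOf m lam) (hT : IsSYT lam m T) (hm : m ≠ 0)
    {t : ℕ} (htA : t < (desComp lam m T).length)
    (htake : (desComp lam m T).take t = lam.take t) : t < lam.length := by
  have hmem : ∀ x ∈ descentList lam m T, 1 ≤ x ∧ x < m := fun x h => descentList_mem' h
  have hsort := descentList_sorted (lam := lam) (m := m) (T := T)
  by_contra hc
  push_neg at hc
  have htlen : t < (descentList lam m T).length + 1 := by
    rw [desComp_length hm] at htA
    exact htA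
  have h1 : lam.take t = lam := List.take_of_length_le (by omega)
  have h2 := desComp_sum_take (lam := lam) (T := T) hm t (by omega)
  rw [htake, h1] at h2
  have h3 : bnd (descentList lam m T) m t <
      bnd (descentList lam m T) m ((descentList lam m T).length + 1) :=
    bnd_strict hsort hmem (by omega) (by omega) le_rfl
  rw [show bnd (descentList lam m T) m ((descentList lam m T).length + 1) = m from
    bnd_top _ m (by omega)] at h3
  have := hlam.2.2
  omega

end Central

/-- Every standard Young tableau of shape `lam ⊢ m` has descent composition at most `lam`
in the lexicographic order, and exactly one standard Young tableau of shape `lam` has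
descent composition equal to `lam`. -/
theorem desComp_lex_le_shape_and_unique_max (m : ℕ) (lam : List ℕ)
    (hlam : IsPartitionOf m lam) :
    (∀ T : Filling, IsSYT lam m T → lexLe (desComp lam m T) lam) ∧
    (∃! T : Filling, IsSYT lam m T ∧ desComp lam m T = lam) := by
  rcases Nat.eq_zero_or_pos m with rfl | hmpos
  · -- degenerate case m = 0
    have hlnil : lam = [] := by
      cases lam with
      | nil => rfl
      | cons a l =>
        have h1 := hlam.2.1 a (by simp)
        have h2 := hlam.2.2
        have h3 : a ≤ a + l.sum := by omega
        simp at h2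
        omega
    subst hlnil
    constructor
    · intro T _
      exact Or.inl (by simp [desComp])
    · refine ⟨fun _ _ => 0, ⟨⟨⟨fun i j _ => rfl, ?_, ?_, ?_⟩, fun i j => le_rfl, ?_⟩, ?_⟩, ?_⟩
      · intro i j hs
        exact absurd hs.1 (by simp)
      · intro i j1 j2 _ hs
        exact absurd hs.1 (by simp)
      · intro i1 i2 j _ hs
        exact absurd hs.1 (by simp)
      · intro k hk1 hk2
        omega
      · simp [desComp]
      · intro T hT
        funext i j
        exact hT.1.1.1 i j (by simp [InShape])
  · have hm0 : m ≠ 0 := by omega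
    constructor
    · intro T hT
      have h := lex_helper (desComp lam m T) lam ?_ ?_
      · rcases h with h | h
        · exact Or.inl h
        · exact Or.inr h
      · intro t h1 h2 htake
        have := central_bound hlam hT hm0 h2 h1 htake
        rwa [List.getD_eq_getElem lam 0 h2] at this
      · intro t h1 htake
        exact central_length hlam hT hm0 h1 htake
    · refine ⟨T0 lam, ⟨T0_SYT hlam, T0_desComp hlam hm0⟩, ?_⟩
      rintro T ⟨hT, hdes⟩
      have hlen : lam.length = (descentList lam m T).length + 1 := by
        have h1 := desComp_length (lam := lam) (T := T) hm0
        have h2 := congrArg List.length hdes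
        omega
      have hrs : RowsStd lam T lam.length :=
        central_rows hlam hT hm0 le_rfl (by omega) (by rw [hdes])
      funext i j
      by_cases hs : InShape lam i j
      · rw [hrs i j hs.1 hs, T0_val hs]
      · rw [hT.1.1 i j hs, T0, if_neg hs]

end QC
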